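/- arXiv:2107.08151 — 3 statements merged into one kernel-verified Lean document; each statement's English description precedes it below -/
import Mathlib

section
/- Let K be a positive integer and γ > 0. Then the average over the main lobe of the reciprocal interference factor satisfies (K/4)·∫_{−2/K}^{2/K} (1 + (γ/K)·(K − K³u²/4))^{−1} du = arctanh(√(γ/(1+γ))) / √(γ(1+γ)). (This is the expectation over a uniformly distributed main-lobe angle appearing in the proof of Lemma 1.) -/
set_option maxHeartbeats 1000000

open Real intervalIntegral

/-- The real inverse hyperbolic tangent, `arctanh x = (1/2) log((1+x)/(1-x))`. -/
noncomputable def arctanh (x : ℝ) : ℝ := (1 / 2) * Real.log ((1 + x) / (1 - x))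

/-- The average over the main lobe of the reciprocal interference factor:
for a positive integer `K` and `γ > 0`,
`(K/4) ∫_{-2/K}^{2/K} (1 + (γ/K)(K - K³u²/4))⁻¹ du
  = arctanh(√(γ/(1+γ))) / √(γ(1+γ))`. -/
theorem main_lobe_average_reciprocal_interference
    (K : ℕ) (hK : 0 < K) (γ : ℝ) (hγ : 0 < γ) :
    ((K : ℝ) / 4) * ∫ u in (-(2 / (K : ℝ)))..(2 / (K : ℝ)),
        (1 + (γ / K) * ((K : ℝ) - (K : ℝ) ^ 3 * u ^ 2 / 4))⁻¹
      = arctanh (Real.sqrt (γ / (1 + γ))) / Real.sqrt (γ * (1 + γ)) := by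
  have hKR : (0:ℝ) < K := Nat.cast_pos.mpr hK
  have hKne : (K:ℝ) ≠ 0 := ne_of_gt hKR
  have h2K : (0:ℝ) < 2/(K:ℝ) := by positivity
  set s := Real.sqrt (1+γ) with hsdef
  set t := Real.sqrt γ with htdef
  have hs2 : s^2 = 1+γ := Real.sq_sqrt (by linarith)
  have ht2 : t^2 = γ := Real.sq_sqrt hγ.le
  have hs : 0 < s := Real.sqrt_pos.mpr (by linarith)
  have ht : 0 < t := Real.sqrt_pos.mpr hγ
  have hts : t < s := by nlinarith
  set r := t * K / 2 with hrdef
  have hrpos : 0 < r := by positivity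
  have hden : ∀ u : ℝ, 1 + (γ/K)*((K:ℝ) - (K:ℝ)^3*u^2/4) = s^2 - (r*u)^2 := by
    intro u
    rw [hs2, hrdef]
    field_simp
    linear_combination (4*(K:ℝ)^2*u^2) * ht2
  have hbound : ∀ u ∈ Set.uIcc (-(2/(K:ℝ))) (2/(K:ℝ)), |r * u| ≤ t := by
    intro u hu
    rw [Set.uIcc_of_le (by linarith : -(2/(K:ℝ)) ≤ 2/(K:ℝ))] at hu
    have h1 : |u| ≤ 2/(K:ℝ) := abs_le.mpr ⟨hu.1, hu.2⟩
    have he : |r * u| = r * |u| := by rw [abs_mul, abs_of_pos hrpos]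
    rw [he]
    calc r * |u| ≤ r * (2/(K:ℝ)) := by nlinarith
    _ = t := by rw [hrdef]; field_simp
  have hpos1 : ∀ u ∈ Set.uIcc (-(2/(K:ℝ))) (2/(K:ℝ)), 0 < s + r*u := by
    intro u hu
    have := abs_le.mp (hbound u hu)
    linarith [this.1]
  have hpos2 : ∀ u ∈ Set.uIcc (-(2/(K:ℝ))) (2/(K:ℝ)), 0 < s - r*u := by
    intro u hu
    have := abs_le.mp (hbound u hu)
    linarith [this.2]
  have hderiv : ∀ u ∈ Set.uIcc (-(2/(K:ℝ))) (2/(K:ℝ)),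
      HasDerivAt (fun x => (1/(2*s*r)) * (Real.log (s + r*x) - Real.log (s - r*x)))
        ((1 + (γ/K)*((K:ℝ) - (K:ℝ)^3*u^2/4))⁻¹) u := by
    intro u hu
    have h1 := hpos1 u hu
    have h2 := hpos2 u hu
    have d1 : HasDerivAt (fun x : ℝ => Real.log (s + r*x)) (r / (s + r*u)) u := by
      have hin : HasDerivAt (fun x : ℝ => s + r*x) r u := by
        simpa using ((hasDerivAt_id u).const_mul r).const_add s
      exact hin.log (ne_of_gt h1)
    have d2 : HasDerivAt (fun x : ℝ => Real.log (s - r*x)) (-r / (s - r*u)) u := by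
      have hin : HasDerivAt (fun x : ℝ => s - r*x) (-r) u := by
        simpa using ((hasDerivAt_id u).const_mul r).const_sub s
      exact hin.log (ne_of_gt h2)
    have hD := (d1.sub d2).const_mul (1/(2*s*r))
    refine hD.congr_deriv ?_; symm
    rw [hden u]
    have hs2u : s^2 - (r*u)^2 = (s + r*u) * (s - r*u) := by ring
    rw [hs2u]
    field_simp
    ring
  have hcont : ContinuousOn (fun u : ℝ => (1 + (γ/K)*((K:ℝ) - (K:ℝ)^3*u^2/4))⁻¹)
      (Set.uIcc (-(2/(K:ℝ))) (2/(K:ℝ))) := by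
    apply ContinuousOn.inv₀
    · exact (by continuity : Continuous fun u : ℝ => 1 + (γ/K)*((K:ℝ) - (K:ℝ)^3*u^2/4)).continuousOn
    · intro u hu
      rw [hden u]
      have hb := abs_le.mp (hbound u hu)
      nlinarith [hb.1, hb.2]
  rw [intervalIntegral.integral_eq_sub_of_hasDerivAt hderiv hcont.intervalIntegrable]
  have hrK : r * (2/(K:ℝ)) = t := by rw [hrdef]; field_simp
  have hrKn : r * (-(2/(K:ℝ))) = -t := by rw [mul_neg, hrK]
  rw [hrK, hrKn]
  have hsq1 : Real.sqrt (γ / (1+γ)) = t / s := by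
    rw [Real.sqrt_div hγ.le]
  have hsq2 : Real.sqrt (γ * (1+γ)) = t * s := by
    rw [Real.sqrt_mul hγ.le]
  rw [hsq1, hsq2]
  have hst : (0:ℝ) < s - t := by linarith
  have h1ts : (1:ℝ) - t/s ≠ 0 := by
    have : t/s < 1 := (div_lt_one hs).mpr hts
    linarith
  have harg : (1 + t/s)/(1 - t/s) = (s+t)/(s-t) := by
    rw [div_eq_div_iff h1ts (ne_of_gt hst)]
    field_simp
  have hlog : Real.log ((s+t)/(s-t)) = Real.log (s+t) - Real.log (s-t) :=
    Real.log_div (by positivity) (ne_of_gt hst)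
  rw [arctanh, harg, hlog]
  simp only [hrdef]
  have hL : s + -t = s - t := by ring
  rw [hL]
  field_simp
  ring
end

section
/- Let K ≥ 2 be an integer and γ > 0. Then (1/2)·∫_{−1}^{1} (1 + (γ/K)·f_K(πu/2))^{−1} du = 1 − (4/(πK))·(1 − q(γ)), where q(γ) = arctanh(√(γ/(1+γ)))/√(γ(1+γ)). (This is the expectation of the reciprocal interference factor over a normalized angle uniformly distributed on (−1,1).) -/
open Real intervalIntegral

/-- The per-interferer attenuation factor
`q(γ) = arctanh(√(γ/(1+γ))) / √(γ(1+γ))`. -/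
noncomputable def q (γ : ℝ) : ℝ :=
  arctanh (Real.sqrt (γ / (1 + γ))) / Real.sqrt (γ * (1 + γ))

/-- The quadratic main-lobe kernel `f_K(x) = K - K³x²/4` for `|x| ≤ 2/K` and
`0` otherwise. -/
noncomputable def fK (K : ℕ) (x : ℝ) : ℝ :=
  if |x| ≤ 2 / (K : ℝ) then (K : ℝ) - (K : ℝ) ^ 3 * x ^ 2 / 4 else 0

set_option maxHeartbeats 800000 in
/-- Auxiliary lemma containing the full computation. -/
theorem uniform_angle_average_reciprocal_interference_aux
    (K : ℕ) (hK : 2 ≤ K) (γ : ℝ) (hγ : 0 < γ) :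
    (1 / 2) * ∫ u in (-1 : ℝ)..1, (1 + (γ / K) * fK K (π * u / 2))⁻¹
      = 1 - (4 / (π * K)) * (1 - q γ) := by
  have hπ := Real.pi_pos
  have hKR : (2:ℝ) ≤ (K:ℝ) := by exact_mod_cast hK
  have hK0 : (0:ℝ) < (K:ℝ) := by linarith
  set a : ℝ := 4 / (π * (K:ℝ)) with ha_def
  have ha : 0 < a := by positivity
  have ha1 : a < 1 := by
    rw [ha_def, div_lt_one (by positivity)]
    nlinarith [Real.pi_gt_three]
  set c : ℝ := γ * π ^ 2 * (K:ℝ) ^ 2 / 16 with hc_def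
  have hc : 0 < c := by positivity
  have hca : c * a ^ 2 = γ := by
    rw [hc_def, ha_def]
    field_simp
    ring
  set g : ℝ → ℝ := fun u => if |u| ≤ a then (1 + γ - c * u ^ 2)⁻¹ else 1 with hg_def
  clear_value g
  clear_value a c
  have hfun : ∀ u : ℝ, (1 + (γ / K) * fK K (π * u / 2))⁻¹ = g u := by
    intro u
    have habs : |π * u / 2| ≤ 2 / (K:ℝ) ↔ |u| ≤ a := by
      rw [abs_div, abs_mul, abs_of_pos hπ, abs_two,
        div_le_div_iff₀ (by norm_num) hK0, ha_def, le_div_iff₀ (by positivity)]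
      constructor <;> intro h <;> nlinarith [abs_nonneg u]
    by_cases h : |u| ≤ a
    · rw [hg_def]; simp only [if_pos h]
      rw [fK, if_pos (habs.mpr h)]
      congr 1
      rw [hc_def]; field_simp; ring
    · rw [hg_def]; simp only [if_neg h]
      rw [fK, if_neg (fun hh => h (habs.mp hh))]
      simp
  simp only [hfun]
  have hga : ∀ u : ℝ, u ^ 2 = a ^ 2 → (1 + γ - c * u ^ 2)⁻¹ = 1 := by
    intro u hu
    rw [hu, hca]
    norm_num
  have hg_left : ∀ u : ℝ, -1 ≤ u → u ≤ -a → g u = 1 := by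
    intro u h1 h2
    by_cases h : |u| ≤ a
    · have hua : u = -a := le_antisymm h2 (by
        have := abs_le.mp h; linarith [this.1])
      simp only [hg_def]
      rw [if_pos h, hua]
      exact hga (-a) (by ring)
    · simp only [hg_def]; rw [if_neg h]
  have hg_right : ∀ u : ℝ, a ≤ u → u ≤ 1 → g u = 1 := by
    intro u h1 h2
    by_cases h : |u| ≤ a
    · have hua : u = a := le_antisymm (le_trans (le_abs_self u) h) h1
      simp only [hg_def]
      rw [if_pos h, hua]
      exact hga a rfl
    · simp only [hg_def]; rw [if_neg h]
  have hg_mid : ∀ u : ℝ, -a ≤ u → u ≤ a → g u = (1 + γ - c * u ^ 2)⁻¹ := by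
    intro u h1 h2
    simp only [hg_def]
    rw [if_pos (abs_le.mpr ⟨h1, h2⟩)]
  -- integrability pieces
  have hna : (-1:ℝ) ≤ -a := by linarith
  have hI1 : IntervalIntegrable g MeasureTheory.volume (-1) (-a) := by
    apply (_root_.intervalIntegrable_const (c := (1:ℝ))).congr
    intro u hu
    rw [Set.uIoc_of_le hna] at hu
    exact (hg_left u hu.1.le hu.2).symm
  have hcont : ContinuousOn (fun u : ℝ => (1 + γ - c * u ^ 2)⁻¹) (Set.uIcc (-a) a) := by
    apply ContinuousOn.inv₀
    · fun_prop
    · intro u hu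
      rw [Set.uIcc_of_le (by linarith)] at hu
      have h2 : c * u ^ 2 ≤ c * a ^ 2 := by
        have : u ^ 2 ≤ a ^ 2 := by nlinarith [hu.1, hu.2]
        nlinarith
      rw [hca] at h2
      have : 0 < 1 + γ - c * u ^ 2 := by linarith
      exact this.ne'
  have hI2' : IntervalIntegrable (fun u : ℝ => (1 + γ - c * u ^ 2)⁻¹)
      MeasureTheory.volume (-a) a := hcont.intervalIntegrable
  have hI2 : IntervalIntegrable g MeasureTheory.volume (-a) a := by
    apply hI2'.congr
    intro u hu
    rw [Set.uIoc_of_le (by linarith : (-a:ℝ) ≤ a)] at hu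
    exact (hg_mid u hu.1.le hu.2).symm
  have hI3 : IntervalIntegrable g MeasureTheory.volume a 1 := by
    apply (_root_.intervalIntegrable_const (c := (1:ℝ))).congr
    intro u hu
    rw [Set.uIoc_of_le ha1.le] at hu
    exact (hg_right u hu.1.le hu.2).symm
  have hsplit : ∫ u in (-1:ℝ)..1, g u
      = (∫ u in (-1:ℝ)..(-a), g u) + (∫ u in (-a:ℝ)..a, g u) + ∫ u in a..(1:ℝ), g u := by
    rw [integral_add_adjacent_intervals hI1 hI2,
      integral_add_adjacent_intervals (hI1.trans hI2) hI3]
  have h1 : ∫ u in (-1:ℝ)..(-a), g u = 1 - a := by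
    rw [integral_congr (g := fun _ => (1:ℝ)) (by
      intro u hu
      rw [Set.uIcc_of_le hna] at hu
      exact hg_left u hu.1 hu.2), integral_const]
    simp; ring
  have h3 : ∫ u in a..(1:ℝ), g u = 1 - a := by
    rw [integral_congr (g := fun _ => (1:ℝ)) (by
      intro u hu
      rw [Set.uIcc_of_le ha1.le] at hu
      exact hg_right u hu.1 hu.2), integral_const]
    simp
  -- the middle integral via FTC
  set b : ℝ := Real.sqrt (1 + γ) with hb_def
  set s : ℝ := Real.sqrt c with hs_def
  have hb : 0 < b := Real.sqrt_pos.mpr (by linarith)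
  have hs : 0 < s := Real.sqrt_pos.mpr hc
  have hb2 : b ^ 2 = 1 + γ := Real.sq_sqrt (by linarith)
  have hs2 : s ^ 2 = c := Real.sq_sqrt hc.le
  have hsa : s * a = Real.sqrt γ := by
    rw [← hca, Real.sqrt_mul hc.le, Real.sqrt_sq ha.le]
  have hsab : s * a < b := by
    rw [hsa, hb_def]
    exact Real.sqrt_lt_sqrt hγ.le (by linarith)
  have hsa0 : 0 < s * a := by positivity
  clear_value b s
  set F : ℝ → ℝ := fun u => (2 * b * s)⁻¹ * (Real.log (b + s * u) - Real.log (b - s * u))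
    with hF_def
  clear_value F
  have hposs : ∀ u : ℝ, -a ≤ u → u ≤ a → 0 < b + s * u ∧ 0 < b - s * u := by
    intro u h1 h2
    have e1 : s * u ≤ s * a := mul_le_mul_of_nonneg_left h2 hs.le
    have e2 : -(s * a) ≤ s * u := by nlinarith
    constructor <;> linarith
  have hderiv : ∀ u ∈ Set.uIcc (-a) a, HasDerivAt F ((1 + γ - c * u ^ 2)⁻¹) u := by
    intro u hu
    rw [Set.uIcc_of_le (by linarith : (-a:ℝ) ≤ a)] at hu
    obtain ⟨hp1, hp2⟩ := hposs u hu.1 hu.2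
    have d1 : HasDerivAt (fun x : ℝ => b + s * x) s u := by
      simpa using ((hasDerivAt_id u).const_mul s).const_add b
    have d2 : HasDerivAt (fun x : ℝ => b - s * x) (-s) u := by
      simpa using ((hasDerivAt_id u).const_mul s).const_sub b
    have l1 := d1.log hp1.ne'
    have l2 := d2.log hp2.ne'
    have hD := (l1.sub l2).const_mul ((2 * b * s)⁻¹)
    have hden : 1 + γ - c * u ^ 2 = (b + s * u) * (b - s * u) := by
      linear_combination -hb2 + u ^ 2 * hs2
    have hval : (2 * b * s)⁻¹ * (s / (b + s * u) - -s / (b - s * u))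
        = (1 + γ - c * u ^ 2)⁻¹ := by
      rw [hden]
      field_simp
      ring
    rw [hF_def, ← hval]
    exact hD
  have hmid : ∫ u in (-a:ℝ)..a, g u = F a - F (-a) := by
    rw [integral_congr (g := fun u : ℝ => (1 + γ - c * u ^ 2)⁻¹) (by
      intro u hu
      rw [Set.uIcc_of_le (by linarith : (-a:ℝ) ≤ a)] at hu
      exact hg_mid u hu.1 hu.2)]
    exact integral_eq_sub_of_hasDerivAt hderiv hI2'
  -- evaluate q γ
  have hq1 : Real.sqrt (γ * (1 + γ)) = s * a * b := by
    rw [Real.sqrt_mul hγ.le, ← hsa, hb_def]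
  have hq2 : Real.sqrt (γ / (1 + γ)) = s * a / b := by
    rw [Real.sqrt_div hγ.le, ← hsa, hb_def]
  have hbsa1 : 0 < b + s * a := by linarith
  have hbsa2 : 0 < b - s * a := by linarith
  have hlog : Real.log ((1 + s * a / b) / (1 - s * a / b))
      = Real.log (b + s * a) - Real.log (b - s * a) := by
    have e1 : 1 + s * a / b = (b + s * a) / b := by field_simp
    have e2 : 1 - s * a / b = (b - s * a) / b := by field_simp
    have e3 : (b + s * a) / b / ((b - s * a) / b) = (b + s * a) / (b - s * a) := by
      field_simp
    rw [e1, e2, e3, Real.log_div hbsa1.ne' hbsa2.ne']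
  have hFval : F a - F (-a)
      = (2 * b * s)⁻¹ * (2 * (Real.log (b + s * a) - Real.log (b - s * a))) := by
    simp only [hF_def, mul_neg, ← sub_eq_add_neg, sub_neg_eq_add]
    ring
  rw [hsplit, h1, h3, hmid, hFval]
  simp only [q, arctanh, hq1, hq2, hlog]
  set lp := Real.log (b + s * a)
  set lm := Real.log (b - s * a)
  field_simp
  ring

/-- Expectation of the reciprocal interference factor over a normalized angle
uniformly distributed on `(-1, 1)`: for an integer `K ≥ 2` and `γ > 0`,
`(1/2) ∫_{-1}^{1} (1 + (γ/K) f_K(πu/2))⁻¹ du = 1 - (4/(πK))(1 - q(γ))`. -/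
theorem uniform_angle_average_reciprocal_interference
    (K : ℕ) (hK : 2 ≤ K) (γ : ℝ) (hγ : 0 < γ) :
    (1 / 2) * ∫ u in (-1 : ℝ)..1, (1 + (γ / K) * fK K (π * u / 2))⁻¹
      = 1 - (4 / (π * K)) * (1 - q γ) :=
  uniform_angle_average_reciprocal_interference_aux K hK γ hγ
end

section
/- Fix a positive integer K, reals ρ > 0, γ > 0, σ² ≥ 0, and a natural number n′. Let g₀, g₁, …, g_{n′} be mutually independent unit-rate exponential random variables, let U₁, …, U_{n′} be mutually independent random variables uniformly distributed on (−2/K, 2/K), independent of all the gᵢ, and set I = ∑_{i=1}^{n′} ρ·gᵢ·f_K(Uᵢ). Then P(ρ·K·g₀ ≥ γ·(σ² + I)) = exp(−γσ²/(ρK)) · q(γ)^{n′}, where q(γ) = arctanh(√(γ/(1+γ)))/√(γ(1+γ)). (This is the exact form of the success probability of Lemma 1 conditioned on n′ interferers lying in the main lobe, under the quadratic kernel model.) -/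
open MeasureTheory ProbabilityTheory Finset
open scoped ENNReal

section Helpers

open Real Set Filter Topology

lemma measurable_fK (K : ℕ) : Measurable (fK K) := by
  unfold fK
  exact Measurable.ite (measurableSet_le (_root_.measurable_abs) measurable_const)
    (by fun_prop) measurable_const

lemma fK_nonneg (K : ℕ) (x : ℝ) : 0 ≤ fK K x := by
  unfold fK
  split_ifs with h
  · rcases Nat.eq_zero_or_pos K with h0 | hKpos
    · simp [h0]
    · have hK' : (0:ℝ) < K := by exact_mod_cast hKpos
      have hx2 : x ^ 2 ≤ (2 / (K:ℝ)) ^ 2 := by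
        have h1 : |x| ^ 2 ≤ (2 / (K:ℝ)) ^ 2 :=
          pow_le_pow_left₀ (abs_nonneg x) h 2
        simpa [sq_abs] using h1
      have e : (K:ℝ) ^ 3 * (2 / (K:ℝ)) ^ 2 / 4 = K := by field_simp; ring
      nlinarith [mul_le_mul_of_nonneg_left hx2 (le_of_lt (pow_pos hK' 3))]
  · exact le_refl _

/-- The unit-rate exponential measure. -/
noncomputable def expM : Measure ℝ := volume.withDensity (exponentialPDF 1)

instance : IsProbabilityMeasure expM :=
  ⟨by rw [expM, withDensity_apply _ MeasurableSet.univ, Measure.restrict_univ];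
      exact lintegral_exponentialPDF_eq_one one_pos⟩

lemma measurable_expPDF : Measurable (exponentialPDF 1) := by
  unfold exponentialPDF
  exact (measurable_exponentialPDFReal 1).ennreal_ofReal

lemma expM_Iic (t : ℝ) :
    expM (Set.Iic t) = ENNReal.ofReal (if 0 ≤ t then 1 - Real.exp (-t) else 0) := by
  rw [expM, withDensity_apply _ measurableSet_Iic]
  simpa using lintegral_exponentialPDF_eq_antiDeriv one_pos t

lemma expM_singleton (t : ℝ) : expM {t} = 0 := by
  rw [expM, withDensity_apply _ (measurableSet_singleton t),
    Measure.restrict_eq_zero.2 (volume_singleton), lintegral_zero_measure]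

lemma expM_Ici {t : ℝ} (ht : 0 ≤ t) : expM (Set.Ici t) = ENNReal.ofReal (Real.exp (-t)) := by
  have hIio : expM (Set.Iio t) = expM (Set.Iic t) := by
    have : Set.Iio t ∪ {t} = Set.Iic t := Set.Iio_union_right
    rw [← this, measure_union (by simp) (measurableSet_singleton t), expM_singleton, add_zero]
  have hcompl : expM (Set.Ici t) = 1 - expM (Set.Iio t) := by
    rw [← Set.compl_Iio, measure_compl measurableSet_Iio (measure_ne_top _ _), measure_univ]
  rw [hcompl, hIio, expM_Iic, if_pos ht]
  have hle : Real.exp (-t) ≤ 1 := by rw [Real.exp_le_one_iff]; linarith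
  rw [show (1:ℝ≥0∞) = ENNReal.ofReal 1 from by simp,
    ← ENNReal.ofReal_sub _ (sub_nonneg.2 hle)]
  congr 1
  ring

lemma map_eq_expM {Ω : Type*} [MeasurableSpace Ω] (P : Measure Ω) [IsProbabilityMeasure P]
    (h : Ω → ℝ) (hm : Measurable h)
    (ht : ∀ t : ℝ, 0 ≤ t → P {ω | h ω > t} = ENNReal.ofReal (Real.exp (-t))) :
    Measure.map h P = expM := by
  have hpm : IsProbabilityMeasure (Measure.map h P) := Measure.isProbabilityMeasure_map hm.aemeasurable
  refine Measure.ext_of_Iic _ _ (fun t => ?_)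
  rw [Measure.map_apply hm measurableSet_Iic, expM_Iic]
  by_cases h0 : 0 ≤ t
  · have hc : {ω | h ω ≤ t} = {ω | h ω > t}ᶜ := by ext ω; simp [not_lt]
    have : P {ω | h ω ≤ t} = 1 - P {ω | h ω > t} := by
      rw [hc, measure_compl (show MeasurableSet {ω | h ω > t} from hm measurableSet_Ioi)
        (measure_ne_top _ _)]
      simp
    rw [show (h ⁻¹' Set.Iic t) = {ω | h ω ≤ t} from rfl, this, ht t h0, if_pos h0,
      ENNReal.ofReal_sub _ (Real.exp_nonneg _)]
    simp
  · push_neg at h0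
    rw [if_neg (not_le.2 h0), ENNReal.ofReal_zero]
    have h1 : P {ω | h ω > 0} = 1 := by rw [ht 0 le_rfl]; simp
    have hsub : (h ⁻¹' Set.Iic t) ⊆ {ω | h ω > 0}ᶜ := by
      intro ω hω; simp only [Set.mem_compl_iff, Set.mem_setOf_eq, not_lt]
      exact le_of_lt (lt_of_le_of_lt hω h0)
    refine le_antisymm (le_trans (measure_mono hsub) ?_) zero_le
    rw [measure_compl (show MeasurableSet {ω | h ω > (0:ℝ)} from hm measurableSet_Ioi)
      (measure_ne_top _ _), h1]
    simp

lemma integral_exp_neg_mul_Ioi {b : ℝ} (hb : 0 < b) :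
    ∫ x in Ioi (0:ℝ), Real.exp (-(b * x)) = 1 / b := by
  have hderiv : ∀ x ∈ Ioi (0:ℝ), HasDerivAt (fun a => -Real.exp (-(b * a)) / b)
      (Real.exp (-(b * x))) x := by
    intro x _
    have h := (ProbabilityTheory.hasDerivAt_neg_exp_mul_exp (r := b) (x := x)).div_const b
    simpa [mul_div_assoc, mul_div_cancel_left₀ _ hb.ne'] using h
  have hcont : ContinuousWithinAt (fun a => -Real.exp (-(b * a)) / b) (Ici (0:ℝ)) 0 := by
    apply Continuous.continuousWithinAt
    fun_prop
  have hint : IntegrableOn (fun x => Real.exp (-(b * x))) (Ioi (0:ℝ)) := by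
    simpa [neg_mul] using exp_neg_integrableOn_Ioi 0 hb
  have htend : Tendsto (fun a => -Real.exp (-(b * a)) / b) atTop (𝓝 0) := by
    have h1 : Tendsto (fun a : ℝ => b * a) atTop atTop := by
      exact tendsto_id.const_mul_atTop hb
    have : Tendsto (fun a => Real.exp (-(b * a))) atTop (𝓝 0) :=
      Real.tendsto_exp_neg_atTop_nhds_zero.comp h1
    have := (this.neg).div_const b
    simpa using this
  have := MeasureTheory.integral_Ioi_of_hasDerivAt_of_tendsto hcont hderiv hint htend
  rw [this]
  simp [Real.exp_zero]
  ring

lemma lint_exp {b : ℝ} (hb : 0 ≤ b) :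
    ∫⁻ x, ENNReal.ofReal (Real.exp (-(b * x))) ∂expM = ENNReal.ofReal (1 / (1 + b)) := by
  have hmeas : Measurable fun x : ℝ => ENNReal.ofReal (Real.exp (-(b * x))) := by fun_prop
  rw [expM, lintegral_withDensity_eq_lintegral_mul _ measurable_expPDF hmeas]
  have hpt : (fun x => (exponentialPDF 1 * fun x => ENNReal.ofReal (Real.exp (-(b * x)))) x)
      = Set.indicator (Ici (0:ℝ)) (fun x => ENNReal.ofReal (Real.exp (-((1 + b) * x)))) := by
    funext x
    simp only [Pi.mul_apply]
    by_cases hx : 0 ≤ x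
    · rw [exponentialPDF_of_nonneg hx, Set.indicator_of_mem (Set.mem_Ici.2 hx),
        ← ENNReal.ofReal_mul (by positivity)]
      congr 1
      rw [one_mul, ← Real.exp_add]
      ring_nf
    · rw [exponentialPDF_of_neg (not_le.1 hx), Set.indicator_of_notMem (by simpa using hx)]
      simp
  rw [lintegral_congr (fun x => congrFun hpt x)]
  rw [lintegral_indicator measurableSet_Ici]
  have h1b : (0:ℝ) < 1 + b := by linarith
  have hIoi : ∫⁻ x in Ici (0:ℝ), ENNReal.ofReal (Real.exp (-((1 + b) * x)))
      = ∫⁻ x in Ioi (0:ℝ), ENNReal.ofReal (Real.exp (-((1 + b) * x))) := by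
    refine setLIntegral_congr ?_
    exact Ioi_ae_eq_Ici.symm
  rw [hIoi, ← MeasureTheory.ofReal_integral_eq_lintegral_ofReal]
  · rw [integral_exp_neg_mul_Ioi h1b]
  · have := exp_neg_integrableOn_Ioi 0 h1b
    apply this.congr_fun ?_ measurableSet_Ioi
    intro x _; ring_nf
  · exact ae_of_all _ fun x => (Real.exp_pos _).le

lemma key_int {A B L : ℝ} (hA : 0 < A) (hB : 0 < B) (hL : 0 < L) (h : B * L ^ 2 < A) :
    ∫ u in (-L)..L, (A - B * u ^ 2)⁻¹ =
      (Real.sqrt A * Real.sqrt B)⁻¹ *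
        Real.log ((Real.sqrt A + Real.sqrt B * L) / (Real.sqrt A - Real.sqrt B * L)) := by
  set s := Real.sqrt A with hs
  set r := Real.sqrt B with hr
  have hs0 : 0 < s := Real.sqrt_pos.2 hA
  have hr0 : 0 < r := Real.sqrt_pos.2 hB
  have hs2 : s ^ 2 = A := Real.sq_sqrt hA.le
  have hr2 : r ^ 2 = B := Real.sq_sqrt hB.le
  have hrL : r * L < s := by
    have h2 : (r * L) ^ 2 < s ^ 2 := by rw [mul_pow, hr2, hs2]; nlinarith
    exact lt_of_pow_lt_pow_left₀ 2 hs0.le h2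
  have hpos : ∀ u ∈ Set.uIcc (-L) L, 0 < s + r * u ∧ 0 < s - r * u := by
    intro u hu
    rw [Set.uIcc_of_le (by linarith)] at hu
    obtain ⟨h1, h2⟩ := hu
    constructor <;> nlinarith [mul_le_mul_of_nonneg_left h1 hr0.le,
      mul_le_mul_of_nonneg_left h2 hr0.le]
  have hdenom : ∀ u ∈ Set.uIcc (-L) L, 0 < A - B * u ^ 2 := by
    intro u hu
    obtain ⟨h1, h2⟩ := hpos u hu
    nlinarith [mul_pos h1 h2]
  set F : ℝ → ℝ := fun u => (2 * s * r)⁻¹ * (Real.log (s + r * u) - Real.log (s - r * u))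
    with hF
  have hderiv : ∀ u ∈ Set.uIcc (-L) L, HasDerivAt F ((A - B * u ^ 2)⁻¹) u := by
    intro u hu
    obtain ⟨h1, h2⟩ := hpos u hu
    have d1 : HasDerivAt (fun u : ℝ => s + r * u) r u := by
      simpa using ((hasDerivAt_id u).const_mul r).const_add s
    have d2 : HasDerivAt (fun u : ℝ => s - r * u) (-r) u := by
      simpa using ((hasDerivAt_id u).const_mul r).const_sub s
    have l1 : HasDerivAt (fun u : ℝ => Real.log (s + r * u)) (r / (s + r * u)) u :=
      d1.log h1.ne'
    have l2 : HasDerivAt (fun u : ℝ => Real.log (s - r * u)) (-r / (s - r * u)) u :=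
      d2.log h2.ne'
    have := ((l1.sub l2).const_mul ((2 * s * r)⁻¹))
    refine (this.congr_deriv ?_ : HasDerivAt F _ u)
    rw [← hs2, ← hr2] at *
    have hd := (hdenom u hu).ne'
    field_simp [hd]
    ring
  have hcont : ContinuousOn (fun u : ℝ => (A - B * u ^ 2)⁻¹) (Set.uIcc (-L) L) := by
    apply ContinuousOn.inv₀ (by fun_prop)
    exact fun u hu => (hdenom u hu).ne'
  have hii : IntervalIntegrable (fun u : ℝ => (A - B * u ^ 2)⁻¹) volume (-L) L :=
    hcont.intervalIntegrable
  rw [intervalIntegral.integral_eq_sub_of_hasDerivAt hderiv hii]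
  have e1 : 0 < s + r * L :=
    (hpos L (by rw [Set.uIcc_of_le (by linarith)]; constructor <;> linarith)).1
  have e2 : 0 < s - r * L :=
    (hpos L (by rw [Set.uIcc_of_le (by linarith)]; constructor <;> linarith)).2
  have eL : F L = (2*s*r)⁻¹ * (Real.log (s + r*L) - Real.log (s - r*L)) := rfl
  have eL' : F (-L) = (2*s*r)⁻¹ * (Real.log (s - r*L) - Real.log (s + r*L)) := by
    rw [hF]
    simp only
    rw [show s + r * -L = s - r * L from by ring, show s - r * -L = s + r * L from by ring]
  rw [eL, eL', Real.log_div e1.ne' e2.ne']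
  field_simp
  ring

lemma real_val (K : ℕ) (hK : 0 < K) (γ : ℝ) (hγ : 0 < γ) :
    (K:ℝ)/4 * ∫ u in (-(2/(K:ℝ)))..(2/(K:ℝ)), (1 + γ - γ * (K:ℝ)^2/4 * u^2)⁻¹ = q γ := by
  have hK0 : (0:ℝ) < K := by exact_mod_cast hK
  have hA : (0:ℝ) < 1 + γ := by linarith
  have hB : (0:ℝ) < γ * (K:ℝ)^2/4 := by positivity
  have hL : (0:ℝ) < 2/(K:ℝ) := by positivity
  have hBL : γ * (K:ℝ)^2/4 * (2/(K:ℝ))^2 < 1 + γ := by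
    have : γ * (K:ℝ)^2/4 * (2/(K:ℝ))^2 = γ := by field_simp; ring
    rw [this]; linarith
  have hint := key_int hA hB hL hBL
  rw [hint]
  have hs0 : 0 < Real.sqrt (1+γ) := Real.sqrt_pos.2 hA
  have hg0 : 0 < Real.sqrt γ := Real.sqrt_pos.2 hγ
  set s := Real.sqrt (1+γ) with hsdef
  set g := Real.sqrt γ with hgdef
  have hsB : Real.sqrt (γ*(K:ℝ)^2/4) = g * ((K:ℝ)/2) := by
    rw [show γ*(K:ℝ)^2/4 = γ*((K:ℝ)/2)^2 from by ring, Real.sqrt_mul hγ.le,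
      Real.sqrt_sq (by positivity)]
  rw [hsB, show g * ((K:ℝ)/2) * (2/(K:ℝ)) = g from by field_simp]
  unfold q arctanh
  have hx : Real.sqrt (γ/(1+γ)) = g / s := Real.sqrt_div hγ.le _
  have hgs : Real.sqrt (γ*(1+γ)) = g * s := Real.sqrt_mul hγ.le _
  rw [hx, hgs]
  have hgls : g < s := by
    have h2 : g ^ 2 < s ^ 2 := by
      rw [hgdef, hsdef, Real.sq_sqrt hγ.le, Real.sq_sqrt hA.le]; linarith
    exact lt_of_pow_lt_pow_left₀ 2 hs0.le h2
  have hR : (1 + g/s)/(1 - g/s) = (s+g)/(s-g) := by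
    rw [show (1:ℝ) + g/s = (s+g)/s from by field_simp,
      show (1:ℝ) - g/s = (s-g)/s from by field_simp]
    rw [div_div_div_cancel_right₀]
    exact hs0.ne'
  rw [hR]
  field_simp
  ring

lemma q_nonneg {γ : ℝ} (hγ : 0 < γ) : 0 ≤ q γ := by
  have hA : (0:ℝ) < 1 + γ := by linarith
  have hx0 : 0 ≤ Real.sqrt (γ/(1+γ)) := Real.sqrt_nonneg _
  have hx1 : Real.sqrt (γ/(1+γ)) < 1 := by
    have h' : γ/(1+γ) < 1 := by rw [div_lt_one hA]; linarith
    have h2 := Real.sqrt_lt_sqrt (by positivity) h'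
    rwa [Real.sqrt_one] at h2
  unfold q arctanh
  apply div_nonneg _ (Real.sqrt_nonneg _)
  apply mul_nonneg (by norm_num)
  apply Real.log_nonneg
  rw [le_div_iff₀ (by linarith)]
  linarith

lemma per_u (K : ℕ) (hK : 0 < K) (γ : ℝ) (hγ : 0 < γ) :
    ∫⁻ u, ENNReal.ofReal ((1 + γ/(K:ℝ) * fK K u)⁻¹)
        ∂(ENNReal.ofReal ((K : ℝ) / 4) •
          volume.restrict (Set.Ioo (-(2 / (K : ℝ))) (2 / (K : ℝ))))
      = ENNReal.ofReal (q γ) := by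
  have hK0 : (0:ℝ) < K := by exact_mod_cast hK
  have hL : (0:ℝ) < 2/(K:ℝ) := by positivity
  rw [lintegral_smul_measure]
  have hcongr : ∀ u ∈ Set.Ioo (-(2/(K:ℝ))) (2/(K:ℝ)),
      ENNReal.ofReal ((1 + γ/(K:ℝ) * fK K u)⁻¹)
        = ENNReal.ofReal ((1 + γ - γ*(K:ℝ)^2/4 * u^2)⁻¹) := by
    intro u hu
    have habs : |u| ≤ 2/(K:ℝ) := by
      rw [abs_le]; exact ⟨hu.1.le, hu.2.le⟩
    have : fK K u = (K:ℝ) - (K:ℝ)^3 * u^2/4 := by rw [fK, if_pos habs]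
    rw [this]
    congr 1
    congr 1
    field_simp
    ring
  rw [setLIntegral_congr_fun measurableSet_Ioo hcongr]
  have hdpos : ∀ u ∈ Set.Icc (-(2/(K:ℝ))) (2/(K:ℝ)), 0 < 1 + γ - γ*(K:ℝ)^2/4 * u^2 := by
    intro u hu
    have h1 : u^2 ≤ (2/(K:ℝ))^2 := by
      rw [← sq_abs]
      apply pow_le_pow_left₀ (abs_nonneg u) _ 2
      rw [abs_le]; exact ⟨hu.1, hu.2⟩
    have h2 : γ*(K:ℝ)^2/4 * u^2 ≤ γ := by
      have := mul_le_mul_of_nonneg_left h1 (le_of_lt (show (0:ℝ) < γ*(K:ℝ)^2/4 by positivity))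
      calc γ*(K:ℝ)^2/4 * u^2 ≤ γ*(K:ℝ)^2/4 * (2/(K:ℝ))^2 := this
        _ = γ := by field_simp; ring
    linarith
  have hcontOn : ContinuousOn (fun u : ℝ => (1 + γ - γ*(K:ℝ)^2/4 * u^2)⁻¹)
      (Set.Icc (-(2/(K:ℝ))) (2/(K:ℝ))) := by
    apply ContinuousOn.inv₀ (by fun_prop)
    exact fun u hu => (hdpos u hu).ne'
  have hint : IntegrableOn (fun u : ℝ => (1 + γ - γ*(K:ℝ)^2/4 * u^2)⁻¹)
      (Set.Ioo (-(2/(K:ℝ))) (2/(K:ℝ))) := by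
    exact (hcontOn.integrableOn_compact isCompact_Icc).mono_set Set.Ioo_subset_Icc_self
  rw [← MeasureTheory.ofReal_integral_eq_lintegral_ofReal hint]
  · rw [smul_eq_mul, ← ENNReal.ofReal_mul (by positivity)]
    rw [← MeasureTheory.integral_Ioc_eq_integral_Ioo,
      ← intervalIntegral.integral_of_le (by linarith)]
    rw [real_val K hK γ hγ]
  · filter_upwards [ae_restrict_mem measurableSet_Ioo] with u hu
    have := hdpos u (Set.Ioo_subset_Icc_self hu)
    positivity

lemma per_pair (K : ℕ) (hK : 0 < K) (γ : ℝ) (hγ : 0 < γ) :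
    ∫⁻ p : ℝ × ℝ, ENNReal.ofReal (Real.exp (-(γ/(K:ℝ) * p.1 * fK K p.2)))
        ∂(expM.prod (ENNReal.ofReal ((K : ℝ) / 4) •
          volume.restrict (Set.Ioo (-(2 / (K : ℝ))) (2 / (K : ℝ)))))
      = ENNReal.ofReal (q γ) := by
  have hK0 : (0:ℝ) < K := by exact_mod_cast hK
  have hmeas : Measurable fun p : ℝ × ℝ =>
      ENNReal.ofReal (Real.exp (-(γ/(K:ℝ) * p.1 * fK K p.2))) := by
    apply Measurable.ennreal_ofReal
    apply Real.measurable_exp.comp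
    apply Measurable.neg
    exact (measurable_fst.const_mul _).mul ((measurable_fK K).comp measurable_snd)
  rw [MeasureTheory.lintegral_prod_symm _ hmeas.aemeasurable]
  have hinner : ∀ u : ℝ,
      ∫⁻ x, ENNReal.ofReal (Real.exp (-(γ/(K:ℝ) * x * fK K u))) ∂expM
        = ENNReal.ofReal ((1 + γ/(K:ℝ) * fK K u)⁻¹) := by
    intro u
    have hb : 0 ≤ γ/(K:ℝ) * fK K u := by
      have := fK_nonneg K u; positivity
    have heq : ∀ x : ℝ, (-(γ/(K:ℝ) * x * fK K u)) = (-((γ/(K:ℝ) * fK K u) * x)) := by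
      intro x; ring
    simp_rw [heq]
    rw [lint_exp hb, one_div]
  simp_rw [hinner]
  exact per_u K hK γ hγ

end Helpers

/-- Success probability of Lemma 1 conditioned on `n′` interferers lying in
the main lobe, under the quadratic kernel model:
`P(ρ K g₀ ≥ γ(σ² + I)) = exp(-γσ²/(ρK)) · q(γ)^{n′}` where
`I = ∑ᵢ ρ gᵢ f_K(Uᵢ)`, the `gᵢ` are unit-rate exponentials and the `Uᵢ` are
uniform on `(-2/K, 2/K)`, all mutually independent. -/
theorem success_prob_given_main_lobe_interferers
    {Ω : Type*} [MeasurableSpace Ω] (P : Measure Ω) [IsProbabilityMeasure P]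
    (K : ℕ) (hK : 0 < K) (ρ γ σ2 : ℝ) (hρ : 0 < ρ) (hγ : 0 < γ) (hσ2 : 0 ≤ σ2)
    (n' : ℕ) (g0 : Ω → ℝ) (g U : Fin n' → Ω → ℝ)
    (hg0 : Measurable g0) (hg : ∀ i, Measurable (g i))
    (hU : ∀ i, Measurable (U i))
    (hindep : iIndepFun
      (Sum.elim (fun _ : Unit => g0) (Sum.elim g U) :
        (Unit ⊕ (Fin n' ⊕ Fin n')) → Ω → ℝ) P)
    (hg0exp : ∀ t : ℝ, 0 ≤ t →
      P {ω | g0 ω > t} = ENNReal.ofReal (Real.exp (-t)))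
    (hgexp : ∀ i, ∀ t : ℝ, 0 ≤ t →
      P {ω | g i ω > t} = ENNReal.ofReal (Real.exp (-t)))
    (hUunif : ∀ i, Measure.map (U i) P
      = ENNReal.ofReal ((K : ℝ) / 4) •
        volume.restrict (Set.Ioo (-(2 / (K : ℝ))) (2 / (K : ℝ)))) :
    P {ω | ρ * K * g0 ω ≥ γ * (σ2 + ∑ i, ρ * g i ω * fK K (U i ω))}
      = ENNReal.ofReal
          (Real.exp (-(γ * σ2) / (ρ * K)) * (q γ) ^ n') := by
  classical
  have hK0 : (0:ℝ) < K := by exact_mod_cast hK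
  set ι := (Unit ⊕ (Fin n' ⊕ Fin n'))
  set X : ι → Ω → ℝ := Sum.elim (fun _ : Unit => g0) (Sum.elim g U) with hX
  have hXm : ∀ i : ι, Measurable (X i) := by
    rintro (⟨⟩ | i | i)
    · exact hg0
    · exact hg i
    · exact hU i
  set a : ℝ := γ / (K:ℝ) with ha
  set c : ℝ := γ * σ2 / (ρ * (K:ℝ)) with hc
  have hc0 : 0 ≤ c := by positivity
  set T : Ω → ℝ := fun ω => c + ∑ i, a * g i ω * fK K (U i ω) with hT
  have hTmeas : Measurable T := by
    apply Measurable.const_add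
    apply Finset.measurable_sum
    intro i _
    exact ((hg i).const_mul a).mul ((measurable_fK K).comp (hU i))
  -- rewrite the event
  have hset : {ω | ρ * K * g0 ω ≥ γ * (σ2 + ∑ i, ρ * g i ω * fK K (U i ω))}
      = {ω | T ω ≤ g0 ω} := by
    ext ω
    simp only [Set.mem_setOf_eq, ge_iff_le]
    have hkey : γ * (σ2 + ∑ i, ρ * g i ω * fK K (U i ω)) = (ρ * K) * T ω := by
      rw [hT]
      simp only
      rw [mul_add, Finset.mul_sum, mul_add, Finset.mul_sum]
      congr 1
      · rw [hc]; field_simp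
      · apply Finset.sum_congr rfl
        intro i _
        rw [ha]; field_simp
    rw [hkey]
    constructor
    · intro h; exact le_of_mul_le_mul_left h (by positivity)
    · intro h; exact mul_le_mul_of_nonneg_left h (by positivity)
  rw [hset]
  -- independence of g0 and T
  have hgT : IndepFun g0 T P := by
    set S₁ : Finset ι := {Sum.inl ()} with hS₁
    set S₂ : Finset ι := Finset.univ.image Sum.inr with hS₂
    have hdisj : Disjoint S₁ S₂ := by
      rw [Finset.disjoint_left]
      intro x hx hx'
      rw [hS₁, Finset.mem_singleton] at hx
      subst hx
      rw [hS₂, Finset.mem_image] at hx'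
      obtain ⟨y, _, hy⟩ := hx'
      exact Sum.inr_ne_inl hy
    have hIF := hindep.indepFun_finset S₁ S₂ hdisj hXm
    have hm₁ : (Sum.inl () : ι) ∈ S₁ := Finset.mem_singleton_self _
    have hm₂ : ∀ i : Fin n', (Sum.inr (Sum.inl i) : ι) ∈ S₂ :=
      fun i => Finset.mem_image_of_mem _ (Finset.mem_univ _)
    have hm₃ : ∀ i : Fin n', (Sum.inr (Sum.inr i) : ι) ∈ S₂ :=
      fun i => Finset.mem_image_of_mem _ (Finset.mem_univ _)
    set φ₁ : (S₁ → ℝ) → ℝ := fun v => v ⟨Sum.inl (), hm₁⟩ with hφ₁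
    set φ₂ : (S₂ → ℝ) → ℝ := fun v =>
      c + ∑ i, a * v ⟨Sum.inr (Sum.inl i), hm₂ i⟩ * fK K (v ⟨Sum.inr (Sum.inr i), hm₃ i⟩)
      with hφ₂
    have hφ₁m : Measurable φ₁ := measurable_pi_apply _
    have hφ₂m : Measurable φ₂ := by
      apply Measurable.const_add
      apply Finset.measurable_sum
      intro i _
      have h1 : Measurable (fun v : {x : ι // x ∈ S₂} → ℝ =>
          v ⟨Sum.inr (Sum.inl i), hm₂ i⟩) := measurable_pi_apply _
      have h2 : Measurable (fun v : {x : ι // x ∈ S₂} → ℝ =>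
          v ⟨Sum.inr (Sum.inr i), hm₃ i⟩) := measurable_pi_apply _
      exact (h1.const_mul a).mul ((measurable_fK K).comp h2)
    exact hIF.comp hφ₁m hφ₂m
  -- T is a.e. nonnegative
  have hgpos : ∀ᵐ ω ∂P, ∀ i, 0 < g i ω := by
    rw [MeasureTheory.ae_all_iff]
    intro i
    have h1 : P {ω | g i ω > 0} = 1 := by rw [hgexp i 0 le_rfl]; simp
    have : P {ω | g i ω > 0}ᶜ = 0 := by
      rw [measure_compl (show MeasurableSet {ω | g i ω > (0:ℝ)} from
        (hg i) measurableSet_Ioi) (measure_ne_top _ _), h1]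
      simp
    filter_upwards [MeasureTheory.measure_eq_zero_iff_ae_notMem.1 this] with ω hω
    simpa using hω
  have hT0 : ∀ᵐ ω ∂P, 0 ≤ T ω := by
    filter_upwards [hgpos] with ω hω
    rw [hT]
    simp only
    have : 0 ≤ ∑ i, a * g i ω * fK K (U i ω) := by
      apply Finset.sum_nonneg
      intro i _
      have h1 := (hω i).le
      have h2 := fK_nonneg K (U i ω)
      have ha0 : 0 ≤ a := by rw [ha]; positivity
      positivity
    linarith
  -- laws
  have hmap0 : Measure.map g0 P = expM := map_eq_expM P g0 hg0 hg0exp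
  have hmapg : ∀ i, Measure.map (g i) P = expM := fun i => map_eq_expM P (g i) (hg i) (hgexp i)
  -- P(T ≤ g0) = E[exp(-T)]
  have hsmeas : MeasurableSet {p : ℝ × ℝ | p.2 ≤ p.1} :=
    measurableSet_le measurable_snd measurable_fst
  have step1 : P {ω | T ω ≤ g0 ω} = ∫⁻ ω, ENNReal.ofReal (Real.exp (-T ω)) ∂P := by
    have hpre : {ω | T ω ≤ g0 ω} = (fun ω => (g0 ω, T ω)) ⁻¹' {p : ℝ × ℝ | p.2 ≤ p.1} := rfl
    rw [hpre, ← Measure.map_apply (hg0.prodMk hTmeas) hsmeas]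
    rw [(ProbabilityTheory.indepFun_iff_map_prod_eq_prod_map_map hg0.aemeasurable
      hTmeas.aemeasurable).1 hgT, hmap0]
    rw [Measure.prod_apply_symm hsmeas]
    have hslice : ∀ t : ℝ, (fun x => (x, t)) ⁻¹' {p : ℝ × ℝ | p.2 ≤ p.1} = Set.Ici t := by
      intro t; ext x; simp
    simp_rw [hslice]
    have haeT : ∀ᵐ t ∂(Measure.map T P), 0 ≤ t := by
      refine (MeasureTheory.ae_map_iff hTmeas.aemeasurable ?_).2 hT0
      exact measurableSet_le measurable_const measurable_id
    rw [lintegral_congr_ae (haeT.mono (fun t ht => expM_Ici ht))]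
    rw [lintegral_map (by fun_prop) hTmeas]
  rw [step1]
  -- factor the exponential
  set H : Fin n' → Ω → ℝ≥0∞ := fun i ω =>
    ENNReal.ofReal (Real.exp (-(a * g i ω * fK K (U i ω)))) with hH
  have hHmeas : ∀ i, Measurable (H i) := by
    intro i
    apply Measurable.ennreal_ofReal
    apply Real.measurable_exp.comp
    exact (((hg i).const_mul a).mul ((measurable_fK K).comp (hU i))).neg
  have hfactor : ∀ ω, ENNReal.ofReal (Real.exp (-T ω))
      = ENNReal.ofReal (Real.exp (-c)) * ∏ i, H i ω := by
    intro ω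
    rw [hT, hH]
    simp only
    rw [neg_add, Real.exp_add, ENNReal.ofReal_mul (Real.exp_nonneg _)]
    congr 1
    rw [← Finset.sum_neg_distrib, Real.exp_sum,
      ENNReal.ofReal_prod_of_nonneg (fun i _ => Real.exp_nonneg _)]
  simp_rw [hfactor]
  rw [lintegral_const_mul _ (Finset.measurable_prod _ (fun i _ => hHmeas i))]
  -- independence factorization of the product
  have hprod : ∀ s : Finset (Fin n'),
      ∫⁻ ω, ∏ i ∈ s, H i ω ∂P = ∏ i ∈ s, ∫⁻ ω, H i ω ∂P := by
    intro s
    induction s using Finset.induction with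
    | empty => simp
    | @insert k s hk ih =>
      have hIndep : IndepFun (H k) (fun ω => ∏ i ∈ s, H i ω) P := by
        set Sf : Finset ι := {Sum.inr (Sum.inl k), Sum.inr (Sum.inr k)} with hSf
        set Tf : Finset ι := s.image (fun i => Sum.inr (Sum.inl i))
          ∪ s.image (fun i => Sum.inr (Sum.inr i)) with hTf
        have hdisj : Disjoint Sf Tf := by
          rw [Finset.disjoint_left]
          intro x hx hx'
          rw [hSf, Finset.mem_insert, Finset.mem_singleton] at hx
          rw [hTf, Finset.mem_union, Finset.mem_image, Finset.mem_image] at hx'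
          rcases hx with rfl | rfl
          · rcases hx' with ⟨y, hy, hyx⟩ | ⟨y, hy, hyx⟩
            · rw [Sum.inr.injEq, Sum.inl.injEq] at hyx; exact hk (hyx ▸ hy)
            · rw [Sum.inr.injEq] at hyx; exact Sum.inr_ne_inl hyx
          · rcases hx' with ⟨y, hy, hyx⟩ | ⟨y, hy, hyx⟩
            · rw [Sum.inr.injEq] at hyx; exact Sum.inl_ne_inr hyx
            · rw [Sum.inr.injEq, Sum.inr.injEq] at hyx; exact hk (hyx ▸ hy)
        have hIF := hindep.indepFun_finset Sf Tf hdisj hXm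
        have hm1 : (Sum.inr (Sum.inl k) : ι) ∈ Sf := by
          rw [hSf]; exact Finset.mem_insert_self _ _
        have hm2 : (Sum.inr (Sum.inr k) : ι) ∈ Sf := by
          rw [hSf]; exact Finset.mem_insert_of_mem (Finset.mem_singleton_self _)
        have hmT1 : ∀ i : {x // x ∈ s}, (Sum.inr (Sum.inl i.1) : ι) ∈ Tf := fun i =>
          Finset.mem_union_left _ (Finset.mem_image_of_mem _ i.2)
        have hmT2 : ∀ i : {x // x ∈ s}, (Sum.inr (Sum.inr i.1) : ι) ∈ Tf := fun i =>
          Finset.mem_union_right _ (Finset.mem_image_of_mem _ i.2)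
        set ψ₁ : (Sf → ℝ) → ℝ≥0∞ := fun v =>
          ENNReal.ofReal (Real.exp (-(a * v ⟨_, hm1⟩ * fK K (v ⟨_, hm2⟩)))) with hψ₁
        set ψ₂ : (Tf → ℝ) → ℝ≥0∞ := fun v =>
          ∏ i ∈ s.attach,
            ENNReal.ofReal (Real.exp (-(a * v ⟨_, hmT1 i⟩ * fK K (v ⟨_, hmT2 i⟩)))) with hψ₂
        have hψ₁m : Measurable ψ₁ := by
          apply Measurable.ennreal_ofReal
          apply Real.measurable_exp.comp
          have h1 : Measurable (fun v : {x : ι // x ∈ Sf} → ℝ => v ⟨_, hm1⟩) :=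
            measurable_pi_apply _
          have h2 : Measurable (fun v : {x : ι // x ∈ Sf} → ℝ => v ⟨_, hm2⟩) :=
            measurable_pi_apply _
          exact ((h1.const_mul a).mul ((measurable_fK K).comp h2)).neg
        have hψ₂m : Measurable ψ₂ := by
          apply Finset.measurable_prod
          intro i _
          apply Measurable.ennreal_ofReal
          apply Real.measurable_exp.comp
          have h1 : Measurable (fun v : {x : ι // x ∈ Tf} → ℝ => v ⟨_, hmT1 i⟩) :=
            measurable_pi_apply _
          have h2 : Measurable (fun v : {x : ι // x ∈ Tf} → ℝ => v ⟨_, hmT2 i⟩) :=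
            measurable_pi_apply _
          exact ((h1.const_mul a).mul ((measurable_fK K).comp h2)).neg
        have hcomp := hIF.comp hψ₁m hψ₂m
        have he1 : (ψ₁ ∘ fun ω (i : Sf) => X i.1 ω) = H k := rfl
        have he2 : (ψ₂ ∘ fun ω (i : Tf) => X i.1 ω) = fun ω => ∏ i ∈ s, H i ω := by
          funext ω
          exact Finset.prod_attach s (fun i => H i ω)
        rw [he1, he2] at hcomp
        exact hcomp
      have := ProbabilityTheory.lintegral_mul_eq_lintegral_mul_lintegral_of_indepFun
        (hHmeas k) (Finset.measurable_prod _ (fun i _ => hHmeas i)) hIndep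
      calc ∫⁻ ω, ∏ i ∈ insert k s, H i ω ∂P
          = ∫⁻ ω, (H k * fun ω => ∏ i ∈ s, H i ω) ω ∂P := by
            apply lintegral_congr; intro ω
            simp [Finset.prod_insert hk]
        _ = (∫⁻ ω, H k ω ∂P) * ∫⁻ ω, ∏ i ∈ s, H i ω ∂P := this
        _ = (∫⁻ ω, H k ω ∂P) * ∏ i ∈ s, ∫⁻ ω, H i ω ∂P := by rw [ih]
        _ = ∏ i ∈ insert k s, ∫⁻ ω, H i ω ∂P := by rw [Finset.prod_insert hk]
  rw [hprod Finset.univ]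
  -- per-interferer expectation
  have hone : ∀ i : Fin n', ∫⁻ ω, H i ω ∂P = ENNReal.ofReal (q γ) := by
    intro i
    have hpi : IndepFun (g i) (U i) P :=
      hindep.indepFun (show (Sum.inr (Sum.inl i) : ι) ≠ Sum.inr (Sum.inr i) by simp)
    have hmp : Measure.map (fun ω => (g i ω, U i ω)) P
        = expM.prod (ENNReal.ofReal ((K : ℝ) / 4) •
          volume.restrict (Set.Ioo (-(2 / (K : ℝ))) (2 / (K : ℝ)))) := by
      rw [(ProbabilityTheory.indepFun_iff_map_prod_eq_prod_map_map (hg i).aemeasurable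
        (hU i).aemeasurable).1 hpi, hmapg i, hUunif i]
    have hFm : Measurable fun p : ℝ × ℝ =>
        ENNReal.ofReal (Real.exp (-(a * p.1 * fK K p.2))) := by
      apply Measurable.ennreal_ofReal
      apply Real.measurable_exp.comp
      exact ((measurable_fst.const_mul a).mul ((measurable_fK K).comp measurable_snd)).neg
    have := lintegral_map (μ := P) hFm ((hg i).prodMk (hU i))
    rw [hmp] at this
    rw [hH]
    simp only
    rw [← this]
    exact per_pair K hK γ hγ
  simp_rw [hone]
  rw [Finset.prod_const, Finset.card_univ, Fintype.card_fin]
  rw [← ENNReal.ofReal_pow (q_nonneg hγ), ← ENNReal.ofReal_mul (Real.exp_nonneg _)]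
  congr 2
  rw [hc]
  ring
end
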